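/- arXiv:2308.15198 — 4 statements merged into one kernel-verified Lean document; each statement's English description precedes it below -/
import Mathlib

section
/- For every nonnegative integer r and every real x < 0, the r-th derivative of (1/2)·sech at x equals ∑_{k=0}^∞ (-1)^k (2k+1)^r e^{(2k+1)x}. -/
noncomputable def sech (x : ℝ) : ℝ := 2 / (Real.exp x + Real.exp (-x))

lemma summable_aux (r : ℕ) {x : ℝ} (hx : x < 0) :
    Summable (fun k : ℕ => ((2 * k + 1 : ℝ)) ^ r * Real.exp ((2 * k + 1) * x)) := by
  have hσ : ‖Real.exp x‖ < 1 := by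
    rw [Real.norm_eq_abs, abs_of_pos (Real.exp_pos x)]
    exact Real.exp_lt_one_iff.2 hx
  have hs := (summable_pow_mul_geometric_of_norm_lt_one r hσ).mul_left ((3:ℝ) ^ r)
  refine hs.of_norm_bounded_eventually_nat ?_
  filter_upwards [Filter.eventually_ge_atTop 1] with k hk
  have hk1 : (1:ℝ) ≤ (k:ℝ) := by exact_mod_cast hk
  have h1 : (2 * (k:ℝ) + 1) ^ r ≤ (3 * k) ^ r := by
    apply pow_le_pow_left₀ (by positivity)
    nlinarith
  have h2 : Real.exp ((2 * k + 1) * x) ≤ Real.exp x ^ k := by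
    rw [← Real.exp_nat_mul]
    apply Real.exp_le_exp.2
    nlinarith
  have hpos : (0:ℝ) ≤ Real.exp x ^ k := by positivity
  rw [Real.norm_eq_abs, abs_of_nonneg (by positivity)]
  calc (2 * (k:ℝ) + 1) ^ r * Real.exp ((2 * k + 1) * x)
      ≤ (3 * (k:ℝ)) ^ r * Real.exp x ^ k := by
        apply mul_le_mul h1 h2 (le_of_lt (Real.exp_pos _)) (by positivity)
    _ = (3:ℝ) ^ r * ((k:ℝ) ^ r * Real.exp x ^ k) := by ring

lemma hasSum_base {x : ℝ} (hx : x < 0) :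
    HasSum (fun k : ℕ => (-1 : ℝ) ^ k * Real.exp ((2 * k + 1) * x)) ((1 / 2) * sech x) := by
  have h : ‖-Real.exp (2 * x)‖ < 1 := by
    rw [norm_neg, Real.norm_eq_abs, abs_of_pos (Real.exp_pos _)]
    exact Real.exp_lt_one_iff.2 (by linarith)
  have hg := (hasSum_geometric_of_norm_lt_one h).mul_left (Real.exp x)
  have he : Real.exp (2 * x) = Real.exp x * Real.exp x := by
    rw [two_mul, Real.exp_add]
  have hfun : (fun k : ℕ => (-1 : ℝ) ^ k * Real.exp ((2 * k + 1) * x))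
      = fun k : ℕ => Real.exp x * (-Real.exp (2 * x)) ^ k := by
    funext k
    rw [show ((-Real.exp (2 * x)) ^ k : ℝ) = (-1 : ℝ) ^ k * Real.exp (2 * x) ^ k from
        neg_pow _ _, ← Real.exp_nat_mul,
      show (k : ℝ) * (2 * x) = (2 * k + 1) * x - x by ring, Real.exp_sub]
    have h0 := (Real.exp_pos x).ne'
    field_simp
  have hval : Real.exp x * (1 - -Real.exp (2 * x))⁻¹ = (1 / 2) * sech x := by
    rw [sub_neg_eq_add, he]
    simp only [sech]
    rw [Real.exp_neg]
    have h0 := (Real.exp_pos x).ne'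
    field_simp
    ring
  rw [hfun, ← hval]
  exact hg

theorem iteratedDeriv_half_sech_series_neg (r : ℕ) (x : ℝ) (hx : x < 0) :
    HasSum (fun k : ℕ => (-1 : ℝ) ^ k * ((2 * k + 1 : ℝ)) ^ r * Real.exp ((2 * k + 1) * x))
      (iteratedDeriv r (fun y => (1 / 2) * sech y) x) := by
  induction r generalizing x hx with
  | zero =>
    simpa [iteratedDeriv_zero] using hasSum_base hx
  | succ r ih =>
    -- derivatives termwise
    set g : ℕ → ℝ → ℝ := fun k y => (-1 : ℝ) ^ k * ((2 * k + 1 : ℝ)) ^ r * Real.exp ((2 * k + 1) * y)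
    set g' : ℕ → ℝ → ℝ := fun k y => (-1 : ℝ) ^ k * ((2 * k + 1 : ℝ)) ^ (r + 1) * Real.exp ((2 * k + 1) * y)
    have hderiv : ∀ k y, HasDerivAt (g k) (g' k y) y := by
      intro k y
      have h0 : HasDerivAt (fun y : ℝ => (2 * (k:ℝ) + 1) * y) (2 * (k:ℝ) + 1) y := by
        simpa using (hasDerivAt_id y).const_mul (2 * (k:ℝ) + 1)
      have h1 : HasDerivAt (fun y : ℝ => Real.exp ((2 * k + 1) * y))
          (Real.exp ((2 * k + 1) * y) * (2 * k + 1)) y := h0.exp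
      have := h1.const_mul ((-1 : ℝ) ^ k * ((2 * k + 1 : ℝ)) ^ r)
      refine this.congr_deriv ?_
      simp only [g', pow_succ]
      ring
    set c : ℝ := x / 2 with hc
    have hcx : x < c := by simp [hc]; linarith
    have hc0 : c < 0 := by simp [hc]; linarith
    have hu : Summable (fun k : ℕ => ((2 * k + 1 : ℝ)) ^ (r + 1) * Real.exp ((2 * k + 1) * c)) :=
      summable_aux (r + 1) hc0
    have hbound : ∀ k y, y ∈ Set.Iio c → ‖g' k y‖ ≤ ((2 * k + 1 : ℝ)) ^ (r + 1) * Real.exp ((2 * k + 1) * c) := by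
      intro k y hy
      simp only [g', norm_mul, norm_pow, norm_neg, norm_one, one_pow, one_mul,
        Real.norm_eq_abs, abs_of_pos (Real.exp_pos _), abs_of_pos (by positivity : (0:ℝ) < 2 * (k:ℝ) + 1)]
      gcongr
      exact le_of_lt hy
    have hsum_g : ∀ y, y < 0 → HasSum (fun k => g k y)
        (iteratedDeriv r (fun y => (1 / 2) * sech y) y) := fun y hy => ih y hy
    have hd : HasDerivAt (fun z => ∑' k, g k z) (∑' k, g' k x) x := by
      refine hasDerivAt_tsum_of_isPreconnected hu isOpen_Iio (isPreconnected_Iio)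
        (fun k y hy => hderiv k y) hbound (show x ∈ Set.Iio c from hcx)
        ((hsum_g x hx).summable) hcx
    have heq : (fun z => ∑' k, g k z) =ᶠ[nhds x] iteratedDeriv r (fun y => (1 / 2) * sech y) := by
      filter_upwards [Iio_mem_nhds hx] with z hz
      exact ((hsum_g z hz).tsum_eq)
    have hd2 : HasDerivAt (iteratedDeriv r (fun y => (1 / 2) * sech y)) (∑' k, g' k x) x :=
      hd.congr_of_eventuallyEq heq.symm
    have hsummable : Summable (fun k => g' k x) := by
      apply (summable_aux (r + 1) hx).of_norm_bounded_eventually_nat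
      filter_upwards with k
      simp only [g', norm_mul, norm_pow, norm_neg, norm_one, one_pow, one_mul,
        Real.norm_eq_abs, abs_of_pos (Real.exp_pos _), abs_of_pos (by positivity : (0:ℝ) < 2 * (k:ℝ) + 1)]
      exact le_rfl
    have : HasSum (fun k => g' k x) (∑' k, g' k x) := hsummable.hasSum
    rw [iteratedDeriv_succ, hd2.deriv]
    exact this
end

section
/- For every nonnegative integer r and every real x > 0, the r-th derivative of (1/2)·sech at x equals ∑_{k=0}^∞ (-1)^{r+k} (2k+1)^r e^{-(2k+1)x}. -/
lemma aux_summable (m : ℕ) {c : ℝ} (hc : 0 < c) :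
    Summable (fun k : ℕ => ((2 * k + 1 : ℝ)) ^ m * Real.exp (-((2 * k + 1) * c))) := by
  have h1 : ‖Real.exp (-c)‖ < 1 := by
    rw [Real.norm_eq_abs, abs_of_pos (Real.exp_pos _)]
    exact Real.exp_lt_one_iff.mpr (by linarith)
  have h2 : Summable (fun n : ℕ => (n : ℝ) ^ m * Real.exp (-c) ^ n) :=
    summable_pow_mul_geometric_of_norm_lt_one m h1
  have h3 := h2.comp_injective (i := fun k : ℕ => 2 * k + 1) (fun a b hab => by dsimp at hab; omega)
  convert h3 using 2 with k
  · rfl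
  simp only [Function.comp]
  rw [← Real.exp_nat_mul]
  push_cast
  ring_nf

lemma norm_term (m : ℕ) (k : ℕ) (y : ℝ) :
    ‖(-1 : ℝ) ^ (m + k) * ((2 * k + 1 : ℝ)) ^ m * Real.exp (-((2 * k + 1) * y))‖
      = ((2 * k + 1 : ℝ)) ^ m * Real.exp (-((2 * k + 1) * y)) := by
  have h1 : (0:ℝ) < (2 * k + 1 : ℝ) := by positivity
  rw [Real.norm_eq_abs, abs_mul, abs_mul, abs_pow, abs_neg, abs_one, one_pow, one_mul,
    abs_of_pos (by positivity), abs_of_pos (Real.exp_pos _)]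

lemma key_lemma (r : ℕ) : ∀ x : ℝ, 0 < x →
    HasSum (fun k : ℕ => (-1 : ℝ) ^ (r + k) * ((2 * k + 1 : ℝ)) ^ r * Real.exp (-((2 * k + 1) * x)))
      (iteratedDeriv r (fun y => (1 / 2) * sech y) x) := by
  induction r with
  | zero =>
    intro x hx
    simp only [iteratedDeriv_zero, Nat.zero_add, pow_zero, mul_one, one_mul]
    have h1 : ‖-Real.exp (-(2 * x))‖ < 1 := by
      rw [norm_neg, Real.norm_eq_abs, abs_of_pos (Real.exp_pos _)]
      exact Real.exp_lt_one_iff.mpr (by linarith)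
    have h2 := (hasSum_geometric_of_norm_lt_one h1).mul_left (Real.exp (-x))
    have heq : (fun k : ℕ => Real.exp (-x) * (-Real.exp (-(2 * x))) ^ k)
        = fun k : ℕ => (-1 : ℝ) ^ k * Real.exp (-((2 * k + 1) * x)) := by
      funext k
      rw [neg_pow, ← Real.exp_nat_mul, mul_comm ((-1:ℝ)^k), ← mul_assoc, ← Real.exp_add]
      ring_nf
    have e1 : Real.exp (-x) * Real.exp x = 1 := by rw [← Real.exp_add]; simp
    have e2 : Real.exp (-(2 * x)) = Real.exp (-x) * Real.exp (-x) := by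
      rw [← Real.exp_add]; ring_nf
    have hval : Real.exp (-x) * (1 - -Real.exp (-(2 * x)))⁻¹ = (1 / 2) * sech x := by
      unfold sech
      rw [sub_neg_eq_add]
      have hpos : (0:ℝ) < 1 + Real.exp (-(2 * x)) := by positivity
      have hpos2 : (0:ℝ) < Real.exp x + Real.exp (-x) := by positivity
      field_simp
      rw [mul_comm x 2, e2]; linear_combination e1
    rw [heq, hval] at h2
    exact h2
  | succ r ih =>
    intro x hx
    set F : ℕ → ℝ → ℝ := fun k y => (-1 : ℝ) ^ (r + k) * ((2 * k + 1 : ℝ)) ^ r *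
      Real.exp (-((2 * k + 1) * y)) with hF
    set F' : ℕ → ℝ → ℝ := fun k y => (-1 : ℝ) ^ (r + 1 + k) * ((2 * k + 1 : ℝ)) ^ (r + 1) *
      Real.exp (-((2 * k + 1) * y)) with hF'
    have hx2 : (0:ℝ) < x / 2 := by linarith
    have hu : Summable (fun k : ℕ => ((2 * k + 1 : ℝ)) ^ (r + 1) * Real.exp (-((2 * k + 1) * (x / 2)))) :=
      aux_summable (r + 1) hx2
    have hderiv : ∀ k : ℕ, ∀ y : ℝ, HasDerivAt (F k) (F' k y) y := by
      intro k y
      have h0 : HasDerivAt (fun y : ℝ => -((2 * (k:ℝ) + 1) * y)) (-(2 * (k:ℝ) + 1)) y := by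
        simpa using (((hasDerivAt_id y).const_mul ((2 * (k:ℝ) + 1))).fun_neg)
      have h1 := (h0.exp).const_mul ((-1 : ℝ) ^ (r + k) * ((2 * k + 1 : ℝ)) ^ r)
      convert h1 using 1
      · rfl
      · rfl
      simp only [F']
      rw [pow_succ ((2:ℝ) * k + 1), show r + 1 + k = (r + k) + 1 by ring, pow_succ]
      ring
    have hbound : ∀ k : ℕ, ∀ y : ℝ, y ∈ Set.Ioi (x / 2) → ‖F' k y‖ ≤
        ((2 * k + 1 : ℝ)) ^ (r + 1) * Real.exp (-((2 * k + 1) * (x / 2))) := by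
      intro k y hy
      simp only [hF']
      rw [norm_term]
      have : Real.exp (-((2 * k + 1) * y)) ≤ Real.exp (-((2 * k + 1) * (x / 2))) := by
        apply Real.exp_le_exp.mpr
        have hk : (0:ℝ) < 2 * k + 1 := by positivity
        have := Set.mem_Ioi.mp hy
        nlinarith
      have hk : (0:ℝ) ≤ ((2 * k + 1 : ℝ)) ^ (r + 1) := by positivity
      nlinarith
    have hsum0 : Summable (fun k => F k x) := by
      apply Summable.of_norm_bounded (aux_summable r hx)
      intro k
      simp only [F]
      rw [norm_term]
    have hkey := hasDerivAt_tsum_of_isPreconnected hu isOpen_Ioi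
      (convex_Ioi (x / 2)).isPreconnected (fun k y _ => hderiv k y) hbound
      (Set.mem_Ioi.mpr (by linarith : x / 2 < x)) hsum0 (Set.mem_Ioi.mpr (by linarith : x / 2 < x))
    have hEq : iteratedDeriv r (fun y => (1 / 2) * sech y) =ᶠ[nhds x] (fun z => ∑' k, F k z) := by
      filter_upwards [Ioi_mem_nhds hx] with y hy
      exact ((ih y hy).tsum_eq).symm
    have hd2 : HasDerivAt (iteratedDeriv r (fun y => (1 / 2) * sech y)) (∑' k, F' k x) x :=
      hkey.congr_of_eventuallyEq hEq
    have hsum' : Summable (fun k => F' k x) := by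
      apply Summable.of_norm_bounded (aux_summable (r + 1) hx)
      intro k
      simp only [F']
      rw [norm_term]
    have hid : iteratedDeriv (r + 1) (fun y => (1 / 2) * sech y) x = ∑' k, F' k x := by
      rw [iteratedDeriv_succ]
      exact hd2.deriv
    rw [hid]
    exact hsum'.hasSum

theorem iteratedDeriv_half_sech_series_pos (r : ℕ) (x : ℝ) (hx : 0 < x) :
    HasSum (fun k : ℕ => (-1 : ℝ) ^ (r + k) * ((2 * k + 1 : ℝ)) ^ r * Real.exp (-((2 * k + 1) * x)))
      (iteratedDeriv r (fun y => (1 / 2) * sech y) x) := by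
  exact key_lemma r x hx
end

section
/- Let Δ : ℝ^d → ℝ be given by Δ(β) = (1/2) ∑_{j=1}^n |a_j(β)| - ∑_{α ∈ R} |α(β)| where the a_j and α are finitely many linear functionals on ℝ^d with rational coefficients (and R is finite). If Δ(β) > 0 for every nonzero β in the integer lattice ℤ^d, then Δ(β) > 0 for every nonzero β ∈ ℝ^d. -/
/-- Rational linear feasibility: a finite system of rational linear inequalities with a real
solution has a rational solution. -/
theorem rat_feasible {ι : Type} [Fintype ι] :
    ∀ (d : ℕ) (c : ι → Fin d → ℚ) (b : ι → ℚ),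
    (∃ x : Fin d → ℝ, ∀ i, ∑ j, (c i j : ℝ) * x j ≤ (b i : ℝ)) →
    ∃ q : Fin d → ℚ, ∀ i, ∑ j, c i j * q j ≤ b i := by
  intro d
  induction d with
  | zero =>
    rintro c b ⟨x, hx⟩
    exact ⟨0, fun i => by have := hx i; simp at this ⊢; exact_mod_cast this⟩
  | succ d ih =>
    rintro c b ⟨x, hx⟩
    by_cases htight : ∃ i, c i ≠ 0 ∧ ∑ j, (c i j : ℝ) * x j = (b i : ℝ)
    · obtain ⟨i0, hci0, heq⟩ := htight
      obtain ⟨j0, hj0'⟩ := Function.ne_iff.mp hci0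
      have hj0 : c i0 j0 ≠ 0 := by simpa using hj0'
      -- reduced system
      set c' : ι → Fin d → ℚ := fun i j =>
        c i (j0.succAbove j) - (c i j0 / c i0 j0) * c i0 (j0.succAbove j) with hc'
      set b' : ι → ℚ := fun i => b i - (c i j0 / c i0 j0) * b i0 with hb'
      have hreal : ∃ y : Fin d → ℝ, ∀ i, ∑ j, (c' i j : ℝ) * y j ≤ (b' i : ℝ) := by
        refine ⟨fun j => x (j0.succAbove j), fun i => ?_⟩
        have hsplit : ∀ w : Fin (d+1) → ℚ, ∑ j, (w j : ℝ) * x j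
            = (w j0 : ℝ) * x j0 + ∑ j : Fin d, (w (j0.succAbove j) : ℝ) * x (j0.succAbove j) :=
          fun w => Fin.sum_univ_succAbove (fun j => (w j : ℝ) * x j) j0
        have h0 := hsplit (c i0)
        have h1 := hsplit (c i)
        have hxi := hx i
        rw [h0] at heq
        rw [h1] at hxi
        have hc00 : (c i0 j0 : ℝ) ≠ 0 := by exact_mod_cast hj0
        have expand : ∑ j, (c' i j : ℝ) * x (j0.succAbove j)
            = ∑ j : Fin d, (c i (j0.succAbove j) : ℝ) * x (j0.succAbove j)
              - ((c i j0 : ℝ) / (c i0 j0 : ℝ)) *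
                ∑ j : Fin d, (c i0 (j0.succAbove j) : ℝ) * x (j0.succAbove j) := by
          rw [Finset.mul_sum, ← Finset.sum_sub_distrib]
          refine Finset.sum_congr rfl fun j _ => ?_
          push_cast [hc']
          ring
        rw [expand]
        have hb'c : (b' i : ℝ) = (b i : ℝ) - ((c i j0 : ℝ) / (c i0 j0 : ℝ)) * (b i0 : ℝ) := by
          push_cast [hb']; ring
        rw [hb'c]
        have key : ((c i j0 : ℝ) / (c i0 j0 : ℝ)) * (c i0 j0 : ℝ) = (c i j0 : ℝ) :=
          div_mul_cancel₀ _ hc00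
        set t : ℝ := (c i j0 : ℝ) / (c i0 j0 : ℝ)
        set B : ℝ := ∑ j : Fin d, (c i0 (j0.succAbove j) : ℝ) * x (j0.succAbove j)
        have hBeq : B = (b i0 : ℝ) - (c i0 j0 : ℝ) * x j0 := by linarith [heq]
        have h2 : t * B = t * (b i0 : ℝ) - (c i j0 : ℝ) * x j0 := by
          rw [hBeq]; linear_combination (-(x j0)) * key
        linarith [hxi, h2]
      obtain ⟨q', hq'⟩ := ih c' b' hreal
      set v : ℚ := (b i0 - ∑ j, c i0 (j0.succAbove j) * q' j) / c i0 j0 with hv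
      set qq : Fin (d+1) → ℚ := j0.insertNth v q' with hqq
      refine ⟨qq, fun i => ?_⟩
      have hsplit : ∀ w : Fin (d+1) → ℚ, ∑ j, w j * qq j
          = w j0 * v + ∑ j : Fin d, w (j0.succAbove j) * q' j := by
        intro w
        rw [Fin.sum_univ_succAbove (fun j => w j * qq j) j0]
        simp [hqq, Fin.insertNth_apply_same, Fin.insertNth_apply_succAbove]
      rw [hsplit]
      have hqi := hq' i
      have expand : ∑ j, c' i j * q' j
          = ∑ j : Fin d, c i (j0.succAbove j) * q' j
            - (c i j0 / c i0 j0) * ∑ j : Fin d, c i0 (j0.succAbove j) * q' j := by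
        rw [Finset.mul_sum, ← Finset.sum_sub_distrib]
        refine Finset.sum_congr rfl fun j _ => ?_
        rw [hc']; ring
      rw [expand, hb'] at hqi
      have hvv : c i j0 * v = (c i j0 / c i0 j0) * (b i0 - ∑ j, c i0 (j0.succAbove j) * q' j) := by
        rw [hv]; field_simp
      nlinarith [hqi, hvv]
    · push_neg at htight
      -- all constraints with nonzero normal are strict at x: use density of rationals
      set U : Set (Fin (d+1) → ℝ) :=
        {y | ∀ i, c i ≠ 0 → ∑ j, (c i j : ℝ) * y j < (b i : ℝ)} with hU
      have hUopen : IsOpen U := by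
        have : U = ⋂ i, {y : Fin (d+1) → ℝ | c i ≠ 0 → ∑ j, (c i j : ℝ) * y j < (b i : ℝ)} := by
          ext y; simp [hU, Set.mem_iInter]
        rw [this]
        refine isOpen_iInter_of_finite fun i => ?_
        by_cases hc : c i = 0
        · simp [hc]
        · have : {y : Fin (d+1) → ℝ | c i ≠ 0 → ∑ j, (c i j : ℝ) * y j < (b i : ℝ)}
              = {y | ∑ j, (c i j : ℝ) * y j < (b i : ℝ)} := by
            ext y; simp [hc]
          rw [this]
          exact isOpen_lt (by continuity) continuous_const
      have hxU : x ∈ U := fun i hci => lt_of_le_of_ne (hx i) (htight i hci)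
      have hdense : Dense (Set.pi Set.univ fun _ : Fin (d+1) => Set.range ((↑) : ℚ → ℝ)) :=
        dense_pi _ fun i _ => Rat.denseRange_cast
      obtain ⟨y, hy, hyU⟩ := hdense.exists_mem_open hUopen ⟨x, hxU⟩
      choose q hq using fun i => (hy i (Set.mem_univ i))
      refine ⟨q, fun i => ?_⟩
      by_cases hc : c i = 0
      · have h0 : (0:ℝ) ≤ (b i : ℝ) := by
          have := hx i; simpa [hc] using this
        simp [hc]
        exact_mod_cast h0
      · have := hyU i hc
        have : ((∑ j, c i j * q j : ℚ) : ℝ) < ((b i : ℚ) : ℝ) := by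
          push_cast
          simpa [hq] using this
        exact le_of_lt (by exact_mod_cast this)

theorem conical_integral_iff_real (d n m : ℕ) (a : Fin n → Fin d → ℚ) (α : Fin m → Fin d → ℚ)
    (Δ : (Fin d → ℝ) → ℝ)
    (hΔ : ∀ β, Δ β = (1 / 2) * ∑ j, |∑ i, (a j i : ℝ) * β i| - ∑ k, |∑ i, (α k i : ℝ) * β i|)
    (hpos : ∀ β : Fin d → ℤ, β ≠ 0 → 0 < Δ (fun i => (β i : ℝ))) :
    ∀ β : Fin d → ℝ, β ≠ 0 → 0 < Δ β := by
  -- homogeneity of Δ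
  have hom : ∀ (t : ℝ), 0 ≤ t → ∀ x : Fin d → ℝ, Δ (fun i => t * x i) = t * Δ x := by
    intro t ht x
    rw [hΔ, hΔ]
    have habs : ∀ (cc : Fin d → ℝ), |∑ i, cc i * (t * x i)| = t * |∑ i, cc i * x i| := by
      intro cc
      rw [show (∑ i, cc i * (t * x i)) = t * ∑ i, cc i * x i by
        rw [Finset.mul_sum]; exact Finset.sum_congr rfl fun i _ => by ring]
      rw [abs_mul, abs_of_nonneg ht]
    simp_rw [habs]
    rw [← Finset.mul_sum, ← Finset.mul_sum]
    ring
  intro β hβ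
  by_contra hle
  push_neg at hle
  obtain ⟨i0, hi0'⟩ := Function.ne_iff.mp hβ
  have hi0 : β i0 ≠ 0 := by simpa using hi0'
  set ε : Fin n → ℚ := fun j => if 0 ≤ ∑ i, (a j i : ℝ) * β i then 1 else -1 with hε
  set δ : Fin m → ℚ := fun k => if 0 ≤ ∑ i, (α k i : ℝ) * β i then 1 else -1 with hδ
  set s : ℚ := if 0 ≤ β i0 then 1 else -1 with hs
  have hε1 : ∀ j, ε j = 1 ∨ ε j = -1 := by intro j; rw [hε]; dsimp only; split_ifs <;> simp
  have hδ1 : ∀ k, δ k = 1 ∨ δ k = -1 := by intro k; rw [hδ]; dsimp only; split_ifs <;> simp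
  have hεa : ∀ j, (ε j : ℝ) * ∑ i, (a j i : ℝ) * β i = |∑ i, (a j i : ℝ) * β i| := by
    intro j; rw [hε]; dsimp only; split_ifs with h
    · push_cast; rw [one_mul, abs_of_nonneg h]
    · push_cast; rw [abs_of_neg (lt_of_not_ge h)]; ring
  have hδa : ∀ k, (δ k : ℝ) * ∑ i, (α k i : ℝ) * β i = |∑ i, (α k i : ℝ) * β i| := by
    intro k; rw [hδ]; dsimp only; split_ifs with h
    · push_cast; rw [one_mul, abs_of_nonneg h]
    · push_cast; rw [abs_of_neg (lt_of_not_ge h)]; ring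
  have hsb : (s : ℝ) * β i0 = |β i0| := by
    rw [hs]; split_ifs with h
    · push_cast; rw [one_mul, abs_of_nonneg h]
    · push_cast; rw [abs_of_neg (lt_of_not_ge h)]; ring
  have hsbpos : 0 < (s : ℝ) * β i0 := by rw [hsb]; exact abs_pos.mpr hi0
  set tr : ℝ := ((s : ℝ) * β i0)⁻¹ with htr
  have htrpos : 0 < tr := inv_pos.mpr hsbpos
  -- the constraint system
  set C : (Fin n ⊕ (Fin m ⊕ Bool)) → Fin d → ℚ := fun p => match p with
    | Sum.inl j => fun i => -(ε j * a j i)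
    | Sum.inr (Sum.inl k) => fun i => -(δ k * α k i)
    | Sum.inr (Sum.inr true) => fun i => (1/2) * (∑ j, ε j * a j i) - ∑ k, δ k * α k i
    | Sum.inr (Sum.inr false) => fun i => if i = i0 then -s else 0
    with hC
  set B : (Fin n ⊕ (Fin m ⊕ Bool)) → ℚ := fun p => match p with
    | Sum.inr (Sum.inr false) => -1
    | _ => 0
    with hB
  -- a helper: expanding the L-row against any vector
  have sumrw : ∀ (x : Fin d → ℝ),
      ∑ i, (((1/2) * (∑ j, ε j * a j i) - ∑ k, δ k * α k i : ℚ) : ℝ) * x i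
      = (1/2) * ∑ j, (ε j : ℝ) * ∑ i, (a j i : ℝ) * x i
        - ∑ k, (δ k : ℝ) * ∑ i, (α k i : ℝ) * x i := by
    have swap : ∀ {p : ℕ} (w : Fin p → ℝ) (M : Fin p → Fin d → ℝ) (x : Fin d → ℝ),
        ∑ i, (∑ j, w j * M j i) * x i = ∑ j, w j * ∑ i, M j i * x i := by
      intro p w M x
      simp_rw [Finset.sum_mul, Finset.mul_sum]
      rw [Finset.sum_comm]
      exact Finset.sum_congr rfl fun j _ => Finset.sum_congr rfl fun i _ => by ring
    intro x
    push_cast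
    calc ∑ i, ((1:ℝ)/2 * (∑ j, (ε j : ℝ) * (a j i : ℝ)) - ∑ k, (δ k : ℝ) * (α k i : ℝ)) * x i
        = ∑ i, (∑ j, ((1:ℝ)/2 * (ε j : ℝ)) * (a j i : ℝ)) * x i
          - ∑ i, (∑ k, (δ k : ℝ) * (α k i : ℝ)) * x i := by
          rw [← Finset.sum_sub_distrib]
          refine Finset.sum_congr rfl fun i _ => ?_
          rw [Finset.mul_sum, ← sub_mul]
          congr 2
          exact Finset.sum_congr rfl fun j _ => by ring
      _ = ∑ j, ((1:ℝ)/2 * (ε j : ℝ)) * ∑ i, (a j i : ℝ) * x i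
          - ∑ k, (δ k : ℝ) * ∑ i, (α k i : ℝ) * x i := by rw [swap, swap]
      _ = (1:ℝ)/2 * ∑ j, (ε j : ℝ) * ∑ i, (a j i : ℝ) * x i
          - ∑ k, (δ k : ℝ) * ∑ i, (α k i : ℝ) * x i := by
          rw [Finset.mul_sum]
          congr 1
          exact Finset.sum_congr rfl fun j _ => by ring
  -- real feasibility
  have hfeas : ∃ x : Fin d → ℝ, ∀ i, ∑ j, (C i j : ℝ) * x j ≤ (B i : ℝ) := by
    refine ⟨fun i => tr * β i, ?_⟩
    rintro (j | k | (_ | _))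
    · -- a_j sign constraint
      show ∑ i, ((-(ε j * a j i) : ℚ) : ℝ) * (tr * β i) ≤ ((0 : ℚ) : ℝ)
      have : ∑ i, ((-(ε j * a j i) : ℚ) : ℝ) * (tr * β i)
          = -(tr * ((ε j : ℝ) * ∑ i, (a j i : ℝ) * β i)) := by
        rw [Finset.mul_sum, Finset.mul_sum, ← Finset.sum_neg_distrib]
        refine Finset.sum_congr rfl fun i _ => ?_
        push_cast; ring
      rw [this, hεa j]
      push_cast
      exact neg_nonpos.mpr (mul_nonneg htrpos.le (abs_nonneg _))
    · show ∑ i, ((-(δ k * α k i) : ℚ) : ℝ) * (tr * β i) ≤ ((0 : ℚ) : ℝ)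
      have : ∑ i, ((-(δ k * α k i) : ℚ) : ℝ) * (tr * β i)
          = -(tr * ((δ k : ℝ) * ∑ i, (α k i : ℝ) * β i)) := by
        rw [Finset.mul_sum, Finset.mul_sum, ← Finset.sum_neg_distrib]
        refine Finset.sum_congr rfl fun i _ => ?_
        push_cast; ring
      rw [this, hδa k]
      push_cast
      exact neg_nonpos.mpr (mul_nonneg htrpos.le (abs_nonneg _))
    · -- normalization constraint
      show ∑ i, ((if i = i0 then -s else 0 : ℚ) : ℝ) * (tr * β i) ≤ ((-1 : ℚ) : ℝ)
      have : ∑ i, ((if i = i0 then -s else 0 : ℚ) : ℝ) * (tr * β i)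
          = -(tr * ((s : ℝ) * β i0)) := by
        rw [show (fun i => ((if i = i0 then -s else 0 : ℚ) : ℝ) * (tr * β i))
            = fun i => if i = i0 then -(tr * ((s:ℝ) * β i)) else 0 from by
          funext i; split_ifs <;> push_cast <;> ring]
        rw [Finset.sum_ite_eq' Finset.univ i0]
        simp
      rw [this, show tr * ((s:ℝ) * β i0) = 1 from inv_mul_cancel₀ (ne_of_gt hsbpos)]
      push_cast
      norm_num
    · -- the Δ constraint
      show ∑ i, (((1/2) * (∑ j, ε j * a j i) - ∑ k, δ k * α k i : ℚ) : ℝ) * (tr * β i)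
          ≤ ((0 : ℚ) : ℝ)
      rw [sumrw]
      have e1 : ∀ j, (ε j : ℝ) * ∑ i, (a j i : ℝ) * (tr * β i)
          = tr * |∑ i, (a j i : ℝ) * β i| := by
        intro j
        rw [show (∑ i, (a j i : ℝ) * (tr * β i)) = tr * ∑ i, (a j i : ℝ) * β i from by
          rw [Finset.mul_sum]; exact Finset.sum_congr rfl fun i _ => by ring]
        rw [← hεa j]; ring
      have e2 : ∀ k, (δ k : ℝ) * ∑ i, (α k i : ℝ) * (tr * β i)
          = tr * |∑ i, (α k i : ℝ) * β i| := by
        intro k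
        rw [show (∑ i, (α k i : ℝ) * (tr * β i)) = tr * ∑ i, (α k i : ℝ) * β i from by
          rw [Finset.mul_sum]; exact Finset.sum_congr rfl fun i _ => by ring]
        rw [← hδa k]; ring
      simp_rw [e1, e2]
      rw [← Finset.mul_sum, ← Finset.mul_sum]
      push_cast
      have : (1:ℝ)/2 * (tr * ∑ j, |∑ i, (a j i : ℝ) * β i|)
          - tr * ∑ k, |∑ i, (α k i : ℝ) * β i| = tr * Δ β := by
        rw [hΔ]; ring
      rw [this]
      exact mul_nonpos_of_nonneg_of_nonpos htrpos.le hle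
  obtain ⟨q, hq⟩ := rat_feasible d C B hfeas
  -- translate the rational solution's properties
  set qr : Fin d → ℝ := fun i => (q i : ℝ) with hqr
  have habs' : ∀ (e : ℚ) (u : ℝ), (e = 1 ∨ e = -1) → 0 ≤ (e : ℝ) * u → |u| = (e : ℝ) * u := by
    rintro e u (rfl | rfl) h
    · push_cast at h ⊢; rw [abs_of_nonneg (by linarith)]; ring
    · push_cast at h ⊢; rw [abs_of_nonpos (by linarith)]; ring
  have hqa : ∀ j, |∑ i, (a j i : ℝ) * qr i| = (ε j : ℝ) * ∑ i, (a j i : ℝ) * qr i := by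
    intro j
    refine habs' _ _ (hε1 j) ?_
    have := hq (Sum.inl j)
    have h2 : ∑ i, (-(ε j * a j i)) * q i ≤ (0:ℚ) := this
    have h3 : -(ε j * ∑ i, a j i * q i) ≤ (0:ℚ) := by
      calc -(ε j * ∑ i, a j i * q i) = ∑ i, (-(ε j * a j i)) * q i := by
            rw [Finset.mul_sum, ← Finset.sum_neg_distrib]
            exact Finset.sum_congr rfl fun i _ => by ring
        _ ≤ 0 := h2
    have h4 : (0:ℚ) ≤ ε j * ∑ i, a j i * q i := by linarith
    have h5 : (0:ℝ) ≤ ((ε j * ∑ i, a j i * q i : ℚ) : ℝ) := by exact_mod_cast h4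
    push_cast at h5
    convert h5 using 2
  have hqα : ∀ k, |∑ i, (α k i : ℝ) * qr i| = (δ k : ℝ) * ∑ i, (α k i : ℝ) * qr i := by
    intro k
    refine habs' _ _ (hδ1 k) ?_
    have h2 : ∑ i, (-(δ k * α k i)) * q i ≤ (0:ℚ) := hq (Sum.inr (Sum.inl k))
    have h3 : -(δ k * ∑ i, α k i * q i) ≤ (0:ℚ) := by
      calc -(δ k * ∑ i, α k i * q i) = ∑ i, (-(δ k * α k i)) * q i := by
            rw [Finset.mul_sum, ← Finset.sum_neg_distrib]
            exact Finset.sum_congr rfl fun i _ => by ring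
        _ ≤ 0 := h2
    have h4 : (0:ℚ) ≤ δ k * ∑ i, α k i * q i := by linarith
    have h5 : (0:ℝ) ≤ ((δ k * ∑ i, α k i * q i : ℚ) : ℝ) := by exact_mod_cast h4
    push_cast at h5
    convert h5 using 2
  have hΔq : Δ qr ≤ 0 := by
    have h2 : ∑ i, ((1/2) * (∑ j, ε j * a j i) - ∑ k, δ k * α k i) * q i ≤ (0:ℚ) :=
      hq (Sum.inr (Sum.inr true))
    have h5 : ((∑ i, ((1/2) * (∑ j, ε j * a j i) - ∑ k, δ k * α k i) * q i : ℚ) : ℝ) ≤ 0 := by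
      exact_mod_cast h2
    have h6 : ∑ i, (((1/2) * (∑ j, ε j * a j i) - ∑ k, δ k * α k i : ℚ) : ℝ) * qr i ≤ 0 := by
      rw [show (∑ i, (((1/2) * (∑ j, ε j * a j i) - ∑ k, δ k * α k i : ℚ) : ℝ) * qr i)
          = ((∑ i, ((1/2) * (∑ j, ε j * a j i) - ∑ k, δ k * α k i) * q i : ℚ) : ℝ) from by
        push_cast; rfl]
      exact h5
    rw [sumrw qr] at h6
    rw [hΔ]
    calc (1:ℝ)/2 * ∑ j, |∑ i, (a j i : ℝ) * qr i| - ∑ k, |∑ i, (α k i : ℝ) * qr i|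
        = 1/2 * ∑ j, (ε j : ℝ) * ∑ i, (a j i : ℝ) * qr i
          - ∑ k, (δ k : ℝ) * ∑ i, (α k i : ℝ) * qr i := by
          rw [Finset.sum_congr rfl fun j _ => hqa j, Finset.sum_congr rfl fun k _ => hqα k]
      _ ≤ 0 := h6
  have hqi0 : q i0 ≠ 0 := by
    have h2 : ∑ i, (if i = i0 then -s else 0 : ℚ) * q i ≤ (-1:ℚ) := hq (Sum.inr (Sum.inr false))
    have h3 : -(s * q i0) ≤ (-1:ℚ) := by
      calc -(s * q i0) = ∑ i, (if i = i0 then -s else 0 : ℚ) * q i := by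
            rw [show (fun i => (if i = i0 then -s else 0 : ℚ) * q i)
                = fun i => if i = i0 then -(s * q i) else 0 from by
              funext i; split_ifs <;> ring]
            rw [Finset.sum_ite_eq' Finset.univ i0]
            simp
        _ ≤ -1 := h2
    intro h
    rw [h, mul_zero, neg_zero] at h3
    norm_num at h3
  -- clear denominators
  set N : ℕ := ∏ i, (q i).den with hN
  have hNpos : 0 < N := Finset.prod_pos fun i _ => (q i).pos
  have hz : ∀ i, ∃ z : ℤ, (z : ℚ) = (N : ℚ) * q i := by
    intro i
    obtain ⟨M, hM⟩ := Finset.dvd_prod_of_mem (fun i => (q i).den) (Finset.mem_univ i)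
    have hden : ((q i).den : ℚ) ≠ 0 := by exact_mod_cast (q i).den_nz
    have hnum : ((q i).num : ℚ) = q i * (q i).den :=
      (div_eq_iff hden).mp (Rat.num_div_den (q i))
    refine ⟨(q i).num * M, ?_⟩
    push_cast
    rw [hnum, hN, hM]
    push_cast
    ring
  choose z hzz using hz
  have hzne : z ≠ 0 := by
    intro h
    apply hqi0
    have := hzz i0
    rw [h] at this
    simp at this
    rcases this with h1 | h2
    · exact absurd h1 (by exact_mod_cast hNpos.ne')
    · exact h2
  have := hpos z hzne
  have hzr : (fun i => ((z i : ℝ))) = fun i => (N : ℝ) * qr i := by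
    funext i
    have := hzz i
    have : ((z i : ℚ) : ℝ) = (((N : ℚ) * q i : ℚ) : ℝ) := by exact_mod_cast this
    push_cast at this
    rw [this, hqr]
  rw [hzr, hom (N : ℝ) (by positivity) qr] at this
  nlinarith [hΔq, this, show (0:ℝ) < (N:ℝ) by exact_mod_cast hNpos]
end

section
/- With the setup of the previous statement (one-variable Weyl algebra, a > 0), any linear functional Tr' : W → ℂ satisfying Tr'(w₁w₂) = Tr'(ω(w₂)w₁) for the automorphism ω(x) = -e^{-2πa}x, ω(y) = -e^{2πa}y, and Tr'(1) = 0, is identically zero. Consequently the space of such twisted traces is one-dimensional. -/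
open Polynomial Real

/-- The operator `x`: multiplication by `X` on `ℂ[X]`. -/
noncomputable def Wx : Module.End ℂ (Polynomial ℂ) := LinearMap.mulLeft ℂ (X : Polynomial ℂ)

/-- The operator `y = -d/dX` on `ℂ[X]`, so that `[Wx, Wy] = 1`. -/
noncomputable def Wy : Module.End ℂ (Polynomial ℂ) := -(Polynomial.derivative : Polynomial ℂ →ₗ[ℂ] Polynomial ℂ)

/-- The Weyl algebra in one variable, realized as operators on `ℂ[X]`. -/
noncomputable def WeylW : Subalgebra ℂ (Module.End ℂ (Polynomial ℂ)) :=
  Algebra.adjoin ℂ {Wx, Wy}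

noncomputable def WxW : WeylW := ⟨Wx, Algebra.subset_adjoin (Set.mem_insert _ _)⟩

noncomputable def WyW : WeylW := ⟨Wy, Algebra.subset_adjoin (Set.mem_insert_of_mem _ rfl)⟩

set_option synthInstance.maxHeartbeats 800000
set_option maxHeartbeats 3000000

lemma weyl_comm' : WxW * WyW - WyW * WxW = 1 := by
  apply Subtype.ext
  show Wx * Wy - Wy * Wx = 1
  apply LinearMap.ext
  intro p
  simp [Wx, Wy, Module.End.mul_apply, derivative_mul]

lemma weyl_yx' : WyW * WxW = WxW * WyW - 1 := by
  have h := weyl_comm'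
  calc WyW * WxW = WxW * WyW - (WxW * WyW - WyW * WxW) := (sub_sub_cancel (WxW * WyW) (WyW * WxW)).symm
    _ = WxW * WyW - 1 := congrArg (fun t => WxW * WyW - t) h

lemma weyl_ypow_x (v : ℕ) :
    WyW ^ (v + 1) * WxW = WxW * WyW ^ (v + 1) - ((v : ℂ) + 1) • WyW ^ v := by
  induction v with
  | zero =>
    calc WyW ^ 1 * WxW = WyW * WxW := by rw [pow_one WyW]
      _ = WxW * WyW - 1 := weyl_yx'
      _ = WxW * WyW ^ 1 - ((0 : ℂ) + 1) • WyW ^ 0 := by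
          rw [pow_one WyW, pow_zero WyW, zero_add, one_smul ℂ (1 : WeylW)]
      _ = WxW * WyW ^ (0 + 1) - (((0 : ℕ) : ℂ) + 1) • WyW ^ 0 := by norm_num
  | succ v ih =>
    calc WyW ^ (v + 2) * WxW = (WyW * WyW ^ (v + 1)) * WxW := by rw [pow_succ' WyW (v + 1)]
      _ = WyW * (WyW ^ (v + 1) * WxW) := mul_assoc WyW (WyW ^ (v + 1)) WxW
      _ = WyW * (WxW * WyW ^ (v + 1) - ((v : ℂ) + 1) • WyW ^ v) :=
          congrArg (fun t => WyW * t) ih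
      _ = WyW * (WxW * WyW ^ (v + 1)) - WyW * (((v : ℂ) + 1) • WyW ^ v) :=
          mul_sub WyW (WxW * WyW ^ (v + 1)) (((v : ℂ) + 1) • WyW ^ v)
      _ = (WyW * WxW) * WyW ^ (v + 1) - ((v : ℂ) + 1) • (WyW * WyW ^ v) :=
          congrArg₂ (fun s t => s - t) (mul_assoc WyW WxW (WyW ^ (v + 1))).symm
            (mul_smul_comm ((v : ℂ) + 1) WyW (WyW ^ v))
      _ = (WxW * WyW - 1) * WyW ^ (v + 1) - ((v : ℂ) + 1) • WyW ^ (v + 1) := by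
          rw [← pow_succ' WyW v]
          exact congrArg₂ (fun s t => s * WyW ^ (v + 1) - t) weyl_yx' rfl
      _ = (WxW * WyW) * WyW ^ (v + 1) - WyW ^ (v + 1) - ((v : ℂ) + 1) • WyW ^ (v + 1) := by
          rw [sub_mul (WxW * WyW) 1 (WyW ^ (v + 1)), one_mul (WyW ^ (v + 1))]
      _ = WxW * WyW ^ (v + 2) - (((v : ℂ) + 1) + 1) • WyW ^ (v + 1) := by
          rw [mul_assoc WxW WyW (WyW ^ (v + 1)), ← pow_succ' WyW (v + 1),
            add_smul ((v : ℂ) + 1) 1 (WyW ^ (v + 1)), one_smul ℂ (WyW ^ (v + 1))]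
          abel
      _ = WxW * WyW ^ (v + 1 + 1) - ((((v : ℕ) + 1 : ℕ) : ℂ) + 1) • WyW ^ (v + 1) := by
          norm_num

lemma weyl_y_xpow (u : ℕ) :
    WyW * WxW ^ (u + 1) = WxW ^ (u + 1) * WyW - ((u : ℂ) + 1) • WxW ^ u := by
  induction u with
  | zero =>
    calc WyW * WxW ^ 1 = WyW * WxW := by rw [pow_one WxW]
      _ = WxW * WyW - 1 := weyl_yx'
      _ = WxW ^ 1 * WyW - ((0 : ℂ) + 1) • WxW ^ 0 := by
          rw [pow_one WxW, pow_zero WxW, zero_add, one_smul ℂ (1 : WeylW)]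
      _ = WxW ^ (0 + 1) * WyW - (((0 : ℕ) : ℂ) + 1) • WxW ^ 0 := by norm_num
  | succ u ih =>
    calc WyW * WxW ^ (u + 2) = WyW * (WxW ^ (u + 1) * WxW) := by rw [pow_succ WxW (u + 1)]
      _ = (WyW * WxW ^ (u + 1)) * WxW := (mul_assoc WyW (WxW ^ (u + 1)) WxW).symm
      _ = (WxW ^ (u + 1) * WyW - ((u : ℂ) + 1) • WxW ^ u) * WxW :=
          congrArg (fun t => t * WxW) ih
      _ = (WxW ^ (u + 1) * WyW) * WxW - (((u : ℂ) + 1) • WxW ^ u) * WxW :=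
          sub_mul (WxW ^ (u + 1) * WyW) (((u : ℂ) + 1) • WxW ^ u) WxW
      _ = WxW ^ (u + 1) * (WyW * WxW) - ((u : ℂ) + 1) • (WxW ^ u * WxW) :=
          congrArg₂ (fun s t => s - t) (mul_assoc (WxW ^ (u + 1)) WyW WxW)
            (smul_mul_assoc ((u : ℂ) + 1) (WxW ^ u) WxW)
      _ = WxW ^ (u + 1) * (WxW * WyW - 1) - ((u : ℂ) + 1) • WxW ^ (u + 1) := by
          rw [← pow_succ WxW u]
          exact congrArg₂ (fun s t => WxW ^ (u + 1) * s - t) weyl_yx' rfl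
      _ = WxW ^ (u + 1) * (WxW * WyW) - WxW ^ (u + 1) - ((u : ℂ) + 1) • WxW ^ (u + 1) := by
          rw [mul_sub (WxW ^ (u + 1)) (WxW * WyW) 1, mul_one (WxW ^ (u + 1))]
      _ = WxW ^ (u + 2) * WyW - (((u : ℂ) + 1) + 1) • WxW ^ (u + 1) := by
          rw [← mul_assoc (WxW ^ (u + 1)) WxW WyW, ← pow_succ WxW (u + 1),
            add_smul ((u : ℂ) + 1) 1 (WxW ^ (u + 1)), one_smul ℂ (WxW ^ (u + 1))]
          abel
      _ = WxW ^ (u + 1 + 1) * WyW - ((((u : ℕ) + 1 : ℕ) : ℂ) + 1) • WxW ^ (u + 1) := by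
          norm_num

set_option synthInstance.maxHeartbeats 800000 in
theorem twisted_trace_unique (a : ℝ) (ha : 0 < a)
    (ω : WeylW →ₐ[ℂ] WeylW)
    (hωx : ((ω WxW : WeylW) : Module.End ℂ (Polynomial ℂ)) = (-(Real.exp (-(2 * π * a))) : ℂ) • Wx)
    (hωy : ((ω WyW : WeylW) : Module.End ℂ (Polynomial ℂ)) = (-(Real.exp (2 * π * a)) : ℂ) • Wy)
    (Tr' : WeylW →ₗ[ℂ] ℂ)
    (htr : ∀ w₁ w₂ : WeylW, Tr' (w₁ * w₂) = Tr' (ω w₂ * w₁))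
    (hone : Tr' 1 = 0) :
    Tr' = 0 := by
  obtain ⟨q, hq⟩ : ∃ c : ℂ, c = (-(Real.exp (-(2 * π * a))) : ℂ) := ⟨_, rfl⟩
  obtain ⟨q', hq'⟩ : ∃ c : ℂ, c = (-(Real.exp (2 * π * a)) : ℂ) := ⟨_, rfl⟩
  have hωX : ω WxW = q • WxW := by
    apply Subtype.ext
    rw [hq, hωx]
    rfl
  have hωY : ω WyW = q' • WyW := by
    apply Subtype.ext
    rw [hq', hωy]
    rfl
  have hqq' : q * q' = 1 := by
    rw [hq, hq', neg_mul_neg, ← Complex.ofReal_mul, ← Real.exp_add, neg_add_cancel,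
      Real.exp_zero, Complex.ofReal_one]
  have hq'ne1 : q' ≠ 1 := by
    rw [hq']
    intro h
    have h2 := congrArg Complex.re h
    simp only [Complex.neg_re, Complex.ofReal_re, Complex.one_re] at h2
    have := Real.exp_pos (2 * π * a)
    linarith
  have habsne : ∀ u v : ℕ, u ≠ v → q ^ u * q' ^ v ≠ 1 := by
    intro u v huv hc
    have h1 := congrArg (fun z : ℂ => ‖z‖) hc
    have habsq : ‖q‖ = Real.exp (-(2 * π * a)) := by
      rw [hq]
      rw [norm_neg, Complex.norm_real, Real.norm_eq_abs, abs_of_pos (Real.exp_pos _)]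
    have habsq' : ‖q'‖ = Real.exp (2 * π * a) := by
      rw [hq']
      rw [norm_neg, Complex.norm_real, Real.norm_eq_abs, abs_of_pos (Real.exp_pos _)]
    rw [norm_mul, norm_pow, norm_pow, habsq, habsq', norm_one, ← Real.exp_nat_mul,
      ← Real.exp_nat_mul, ← Real.exp_add, Real.exp_eq_one_iff] at h1
    have hπ : 0 < 2 * π * a := by positivity
    have h5 : ((v : ℝ) - (u : ℝ)) * (2 * π * a) = 0 := by linarith [h1]
    rcases mul_eq_zero.mp h5 with h6 | h6
    · have : (u : ℝ) = (v : ℝ) := by linarith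
      exact huv (Nat.cast_injective this)
    · linarith
  -- monomial products
  have hmulX : ∀ u v : ℕ, WxW * (WxW ^ u * WyW ^ v) = WxW ^ (u + 1) * WyW ^ v := by
    intro u v
    calc WxW * (WxW ^ u * WyW ^ v) = (WxW * WxW ^ u) * WyW ^ v :=
          (mul_assoc WxW (WxW ^ u) (WyW ^ v)).symm
      _ = WxW ^ (u + 1) * WyW ^ v := by rw [← pow_succ' WxW u]
  have hmulX' : ∀ u v : ℕ, WxW ^ u * (WxW * WyW ^ v) = WxW ^ (u + 1) * WyW ^ v := by
    intro u v
    calc WxW ^ u * (WxW * WyW ^ v) = (WxW ^ u * WxW) * WyW ^ v :=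
          (mul_assoc (WxW ^ u) WxW (WyW ^ v)).symm
      _ = WxW ^ (u + 1) * WyW ^ v := by rw [← pow_succ WxW u]
  have hωm : ∀ u v : ℕ, ω (WxW ^ u * WyW ^ v) = (q ^ u * q' ^ v) • (WxW ^ u * WyW ^ v) := by
    intro u v
    calc ω (WxW ^ u * WyW ^ v) = ω (WxW ^ u) * ω (WyW ^ v) := map_mul ω (WxW ^ u) (WyW ^ v)
      _ = (ω WxW) ^ u * (ω WyW) ^ v :=
          congrArg₂ (fun s t => s * t) (map_pow ω WxW u) (map_pow ω WyW v)
      _ = (q • WxW) ^ u * (q' • WyW) ^ v := congrArg₂ (fun s t => s ^ u * t ^ v) hωX hωY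
      _ = (q ^ u • WxW ^ u) * (q' ^ v • WyW ^ v) :=
          congrArg₂ (fun s t => s * t) (smul_pow q WxW u) (smul_pow q' WyW v)
      _ = q ^ u • (WxW ^ u * (q' ^ v • WyW ^ v)) :=
          smul_mul_assoc (q ^ u) (WxW ^ u) (q' ^ v • WyW ^ v)
      _ = q ^ u • (q' ^ v • (WxW ^ u * WyW ^ v)) :=
          congrArg (fun t => q ^ u • t) (mul_smul_comm (q' ^ v) (WxW ^ u) (WyW ^ v))
      _ = (q ^ u * q' ^ v) • (WxW ^ u * WyW ^ v) :=
          (mul_smul (q ^ u) (q' ^ v) (WxW ^ u * WyW ^ v)).symm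
  have htrω : ∀ w : WeylW, Tr' w = Tr' (ω w) := by
    intro w
    have h := htr 1 w
    rwa [one_mul w, mul_one (ω w)] at h
  -- off-diagonal monomials
  have hne : ∀ u v : ℕ, u ≠ v → Tr' (WxW ^ u * WyW ^ v) = 0 := by
    intro u v huv
    have h := htrω (WxW ^ u * WyW ^ v)
    rw [hωm u v, map_smul Tr' (q ^ u * q' ^ v) (WxW ^ u * WyW ^ v), smul_eq_mul] at h
    have h2 : (1 - q ^ u * q' ^ v) * Tr' (WxW ^ u * WyW ^ v) = 0 := by linear_combination h
    rcases mul_eq_zero.mp h2 with h3 | h3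
    · exact absurd (by linear_combination -h3) (habsne u v huv)
    · exact h3
  -- diagonal monomials
  have hdiag : ∀ u : ℕ, Tr' (WxW ^ u * WyW ^ u) = 0 := by
    intro u
    induction u with
    | zero =>
      have h1 : WxW ^ 0 * WyW ^ 0 = (1 : WeylW) := by
        rw [pow_zero WxW, pow_zero WyW, one_mul (1 : WeylW)]
      rw [h1]
      exact hone
    | succ u ih =>
      have h := htr WxW (WxW ^ u * WyW ^ (u + 1))
      rw [hmulX u (u + 1)] at h
      have hr : ω (WxW ^ u * WyW ^ (u + 1)) * WxW
          = (q ^ u * q' ^ (u + 1)) • (WxW ^ (u + 1) * WyW ^ (u + 1))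
            - (q ^ u * q' ^ (u + 1)) • (((u : ℂ) + 1) • (WxW ^ u * WyW ^ u)) := by
        calc ω (WxW ^ u * WyW ^ (u + 1)) * WxW
            = ((q ^ u * q' ^ (u + 1)) • (WxW ^ u * WyW ^ (u + 1))) * WxW :=
              congrArg (fun t => t * WxW) (hωm u (u + 1))
          _ = (q ^ u * q' ^ (u + 1)) • ((WxW ^ u * WyW ^ (u + 1)) * WxW) :=
              smul_mul_assoc (q ^ u * q' ^ (u + 1)) (WxW ^ u * WyW ^ (u + 1)) WxW
          _ = (q ^ u * q' ^ (u + 1)) • (WxW ^ u * (WyW ^ (u + 1) * WxW)) :=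
              congrArg (fun t => (q ^ u * q' ^ (u + 1)) • t)
                (mul_assoc (WxW ^ u) (WyW ^ (u + 1)) WxW)
          _ = (q ^ u * q' ^ (u + 1)) •
                (WxW ^ u * (WxW * WyW ^ (u + 1) - ((u : ℂ) + 1) • WyW ^ u)) :=
              congrArg (fun t => (q ^ u * q' ^ (u + 1)) • (WxW ^ u * t)) (weyl_ypow_x u)
          _ = (q ^ u * q' ^ (u + 1)) •
                (WxW ^ u * (WxW * WyW ^ (u + 1)) - WxW ^ u * (((u : ℂ) + 1) • WyW ^ u)) :=
              congrArg (fun t => (q ^ u * q' ^ (u + 1)) • t)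
                (mul_sub (WxW ^ u) (WxW * WyW ^ (u + 1)) (((u : ℂ) + 1) • WyW ^ u))
          _ = (q ^ u * q' ^ (u + 1)) •
                (WxW ^ (u + 1) * WyW ^ (u + 1) - ((u : ℂ) + 1) • (WxW ^ u * WyW ^ u)) := by
              refine congrArg (fun t => (q ^ u * q' ^ (u + 1)) • t)
                (congrArg₂ (fun s t => s - t) (hmulX' u (u + 1)) ?_)
              exact mul_smul_comm ((u : ℂ) + 1) (WxW ^ u) (WyW ^ u)
          _ = (q ^ u * q' ^ (u + 1)) • (WxW ^ (u + 1) * WyW ^ (u + 1))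
              - (q ^ u * q' ^ (u + 1)) • (((u : ℂ) + 1) • (WxW ^ u * WyW ^ u)) :=
              smul_sub (q ^ u * q' ^ (u + 1)) (WxW ^ (u + 1) * WyW ^ (u + 1))
                (((u : ℂ) + 1) • (WxW ^ u * WyW ^ u))
      rw [hr, map_sub Tr' ((q ^ u * q' ^ (u + 1)) • (WxW ^ (u + 1) * WyW ^ (u + 1)))
          ((q ^ u * q' ^ (u + 1)) • (((u : ℂ) + 1) • (WxW ^ u * WyW ^ u))),
        map_smul Tr' (q ^ u * q' ^ (u + 1)) (WxW ^ (u + 1) * WyW ^ (u + 1)),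
        map_smul Tr' (q ^ u * q' ^ (u + 1)) (((u : ℂ) + 1) • (WxW ^ u * WyW ^ u)),
        map_smul Tr' ((u : ℂ) + 1) (WxW ^ u * WyW ^ u), ih] at h
      have hc : q ^ u * q' ^ (u + 1) = q' := by
        calc q ^ u * q' ^ (u + 1) = (q * q') ^ u * q' := by ring
          _ = q' := by rw [hqq', one_pow, one_mul]
      rw [hc, smul_zero ((u : ℂ) + 1), smul_zero q', sub_zero, smul_eq_mul] at h
      have h2 : (1 - q') * Tr' (WxW ^ (u + 1) * WyW ^ (u + 1)) = 0 := by linear_combination h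
      rcases mul_eq_zero.mp h2 with h3 | h3
      · exact absurd (by linear_combination -h3) hq'ne1
      · exact h3
  -- the span of normally ordered monomials
  set S : Submodule ℂ WeylW :=
    Submodule.span ℂ {w : WeylW | ∃ u v : ℕ, w = WxW ^ u * WyW ^ v} with hS
  have hgen : ∀ u v : ℕ, WxW ^ u * WyW ^ v ∈ S := fun u v =>
    Submodule.subset_span ⟨u, v, rfl⟩
  have hXS : ∀ s ∈ S, WxW * s ∈ S := by
    intro s hs
    refine Submodule.span_induction ?_ ?_ ?_ ?_ hs
    · rintro w ⟨u, v, rfl⟩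
      rw [hmulX u v]
      exact hgen (u + 1) v
    · rw [mul_zero WxW]
      exact Submodule.zero_mem S
    · intro x y hx hy px py
      rw [mul_add WxW x y]
      exact Submodule.add_mem S px py
    · intro c x hx px
      rw [mul_smul_comm c WxW x]
      exact Submodule.smul_mem S c px
  have hYS : ∀ s ∈ S, WyW * s ∈ S := by
    intro s hs
    refine Submodule.span_induction ?_ ?_ ?_ ?_ hs
    · rintro w ⟨u, v, rfl⟩
      cases u with
      | zero =>
        have h1 : WyW * (WxW ^ 0 * WyW ^ v) = WxW ^ 0 * WyW ^ (v + 1) := by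
          rw [pow_zero WxW, one_mul (WyW ^ v), one_mul (WyW ^ (v + 1)), ← pow_succ' WyW v]
        rw [h1]
        exact hgen 0 (v + 1)
      | succ u =>
        have h1 : WyW * (WxW ^ (u + 1) * WyW ^ v)
            = WxW ^ (u + 1) * WyW ^ (v + 1) - ((u : ℂ) + 1) • (WxW ^ u * WyW ^ v) := by
          calc WyW * (WxW ^ (u + 1) * WyW ^ v) = (WyW * WxW ^ (u + 1)) * WyW ^ v :=
                (mul_assoc WyW (WxW ^ (u + 1)) (WyW ^ v)).symm
            _ = (WxW ^ (u + 1) * WyW - ((u : ℂ) + 1) • WxW ^ u) * WyW ^ v :=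
                congrArg (fun t => t * WyW ^ v) (weyl_y_xpow u)
            _ = (WxW ^ (u + 1) * WyW) * WyW ^ v - (((u : ℂ) + 1) • WxW ^ u) * WyW ^ v :=
                sub_mul (WxW ^ (u + 1) * WyW) (((u : ℂ) + 1) • WxW ^ u) (WyW ^ v)
            _ = WxW ^ (u + 1) * (WyW * WyW ^ v) - ((u : ℂ) + 1) • (WxW ^ u * WyW ^ v) :=
                congrArg₂ (fun s t => s - t) (mul_assoc (WxW ^ (u + 1)) WyW (WyW ^ v))
                  (smul_mul_assoc ((u : ℂ) + 1) (WxW ^ u) (WyW ^ v))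
            _ = WxW ^ (u + 1) * WyW ^ (v + 1) - ((u : ℂ) + 1) • (WxW ^ u * WyW ^ v) := by
                rw [← pow_succ' WyW v]
        rw [h1]
        rw [sub_eq_add_neg (WxW ^ (u + 1) * WyW ^ (v + 1)) (((u : ℂ) + 1) • (WxW ^ u * WyW ^ v)),
          ← neg_smul ((u : ℂ) + 1) (WxW ^ u * WyW ^ v)]
        exact Submodule.add_mem S (hgen (u + 1) (v + 1))
          (Submodule.smul_mem S (-((u : ℂ) + 1)) (hgen u v))
    · rw [mul_zero WyW]
      exact Submodule.zero_mem S
    · intro x y hx hy px py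
      rw [mul_add WyW x y]
      exact Submodule.add_mem S px py
    · intro c x hx px
      rw [mul_smul_comm c WyW x]
      exact Submodule.smul_mem S c px
  have h1S : (1 : WeylW) ∈ S := by
    have h00 : WxW ^ 0 * WyW ^ 0 = (1 : WeylW) := by
      rw [pow_zero WxW, pow_zero WyW, one_mul (1 : WeylW)]
    rw [← h00]
    exact hgen 0 0
  have htopS : ∀ w : WeylW, w ∈ S := by
    intro w
    have hpre := Algebra.adjoin_adjoin_coe_preimage (R := ℂ)
      (s := ({Wx, Wy} : Set (Module.End ℂ (Polynomial ℂ))))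
    have hw : w ∈ Algebra.adjoin ℂ
        ((Subtype.val ⁻¹' ({Wx, Wy} : Set (Module.End ℂ (Polynomial ℂ)))) : Set WeylW) :=
      (eq_top_iff.mp hpre) (Algebra.mem_top)
    have hP : ∀ s ∈ S, w * s ∈ S := by
      refine Algebra.adjoin_induction (p := fun x _ => ∀ s ∈ S, x * s ∈ S) ?_ ?_ ?_ ?_ hw
      · intro x hx
        have hx' : (x : Module.End ℂ (Polynomial ℂ)) ∈
            ({Wx, Wy} : Set (Module.End ℂ (Polynomial ℂ))) := hx
        rcases hx' with h | h
        · obtain rfl : x = WxW := Subtype.ext h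
          exact hXS
        · obtain rfl : x = WyW := Subtype.ext h
          exact hYS
      · intro r s hs
        have h2 : algebraMap ℂ WeylW r * s = r • s := (Algebra.smul_def r s).symm
        rw [h2]
        exact Submodule.smul_mem S r hs
      · intro x y hx hy px py s hs
        rw [add_mul x y s]
        exact Submodule.add_mem S (px s hs) (py s hs)
      · intro x y hx hy px py s hs
        rw [mul_assoc x y s]
        exact px (y * s) (py s hs)
    have h := hP 1 h1S
    rwa [mul_one w] at h
  have hvan : ∀ s ∈ S, Tr' s = 0 := by
    intro s hs
    refine Submodule.span_induction ?_ ?_ ?_ ?_ hs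
    · rintro w ⟨u, v, rfl⟩
      by_cases h : u = v
      · subst h
        exact hdiag u
      · exact hne u v h
    · exact map_zero Tr'
    · intro x y hx hy px py
      rw [map_add Tr' x y, px, py, add_zero (0 : ℂ)]
    · intro c x hx px
      rw [map_smul Tr' c x, px, smul_zero c]
  apply LinearMap.ext
  intro w
  rw [LinearMap.zero_apply w]
  exact hvan w (htopS w)
end
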